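/- Let v ∈ ℕ^n, k ∈ ℕ, b = max_j v_j, and let v̄ ∈ ℕ^b be the counts vector of v. For u ∈ ℕ^n with u ≤ v, define f(u) ∈ ℕ^b by f(u)_i = v'_i − (v−u)'_i. Then the image of C^v(k) under f is exactly S = {s ∈ ℕ^b : Σ_i s_i = k and s_i ≤ v̄_i + s_{i+1} for all 1 ≤ i ≤ b, where s_{b+1} := 0}, and for every s ∈ S, the number of u ∈ C^v(k) with f(u) = s equals ∏_{i=1}^b binom(v̄_i + s_{i+1}, s_i). -/

import Mathlib

/-- Number of entries of `v` equal to `i` (the counts vector of `v`, evaluated at `i`). -/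
def countAt {n : ℕ} (v : Fin n → ℕ) (i : ℕ) : ℕ :=
  (Finset.univ.filter fun j => v j = i).card

/-- Number of entries of `v` that are `≥ i` (the conjugate vector of `v`, evaluated at `i`). -/
def conjAt {n : ℕ} (v : Fin n → ℕ) (i : ℕ) : ℕ :=
  (Finset.univ.filter fun j => i ≤ v j).card

/-- Left shift of a vector in `ℕ^b`: `(Ls)_i = s_{i+1}`, with a trailing zero. -/
def shiftL {b : ℕ} (s : Fin b → ℕ) : Fin b → ℕ :=
  fun i => if h : i.val + 1 < b then s ⟨i.val + 1, h⟩ else 0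

/-- `C^r(k)`: the vectors `s ∈ ℕ^b` with `∑ s = k` and `s ≤ r` componentwise. -/
def compBdd {b : ℕ} (r : Fin b → ℕ) (k : ℕ) : Finset (Fin b → ℕ) :=
  (Finset.Nat.antidiagonalTuple b k).filter fun s => ∀ i, s i ≤ r i

/-- The set `S` of `s ∈ ℕ^b` with `∑ s = k` and `s_i ≤ r_i + s_{i+1}` (where `s_{b+1} = 0`). -/
def compBddL {b : ℕ} (r : Fin b → ℕ) (k : ℕ) : Finset (Fin b → ℕ) :=
  (Finset.Nat.antidiagonalTuple b k).filter fun s => ∀ i, s i ≤ r i + shiftL s i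

/-! ### Auxiliary lemmas -/

open Finset

lemma conjAt_mono' {n : ℕ} {w w' : Fin n → ℕ} (h : ∀ j, w j ≤ w' j) (i : ℕ) :
    conjAt w i ≤ conjAt w' i :=
  Finset.card_le_card (fun j hj => by
    simp only [mem_filter, mem_univ, true_and] at *; exact hj.trans (h j))

lemma conjAt_anti' {n : ℕ} (w : Fin n → ℕ) {i i' : ℕ} (h : i ≤ i') :
    conjAt w i' ≤ conjAt w i :=
  Finset.card_le_card (fun j hj => by
    simp only [mem_filter, mem_univ, true_and] at *; exact h.trans hj)

lemma conjAt_split' {n : ℕ} (w : Fin n → ℕ) (i : ℕ) :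
    conjAt w i = countAt w i + conjAt w (i + 1) := by
  classical
  unfold conjAt countAt
  rw [← Finset.card_union_of_disjoint]
  · congr 1
    ext j
    simp only [mem_union, mem_filter, mem_univ, true_and]
    omega
  · rw [Finset.disjoint_filter]
    intro j _ h
    omega

lemma conjAt_zero_of_lt' {n : ℕ} {w : Fin n → ℕ} {b : ℕ} (h : ∀ j, w j ≤ b) :
    conjAt w (b + 1) = 0 := by
  unfold conjAt
  rw [Finset.card_eq_zero, Finset.filter_eq_empty_iff]
  intro j _
  have := h j; omega

lemma sum_eq_sum_conjAt' {n : ℕ} {w : Fin n → ℕ} {b : ℕ} (h : ∀ j, w j ≤ b) :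
    ∑ j, w j = ∑ l ∈ Finset.Icc 1 b, conjAt w l := by
  unfold conjAt
  simp_rw [Finset.card_filter]
  rw [Finset.sum_comm]
  refine Finset.sum_congr rfl fun j _ => ?_
  rw [← Finset.card_filter]
  have hf : Finset.filter (fun l => l ≤ w j) (Finset.Icc 1 b) = Finset.Icc 1 (w j) := by
    ext l
    simp only [mem_filter, mem_Icc]
    have := h j; omega
  rw [hf, Nat.card_Icc]; omega

lemma sum_Icc_one' {M : Type*} [AddCommMonoid M] (b : ℕ) (g : ℕ → M) :
    ∑ l ∈ Finset.Icc 1 b, g l = ∑ i : Fin b, g (i.val + 1) := by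
  rw [← Finset.Ico_add_one_right_eq_Icc, Finset.sum_Ico_eq_sum_range,
    Fin.sum_univ_eq_sum_range (fun i => g (i + 1)) b]
  have hb : b + 1 - 1 = b := by omega
  rw [hb]
  exact Finset.sum_congr rfl fun i _ => by rw [Nat.add_comm]

lemma prod_Icc_one' {M : Type*} [CommMonoid M] (b : ℕ) (g : ℕ → M) :
    ∏ l ∈ Finset.Icc 1 b, g l = ∏ i : Fin b, g (i.val + 1) := by
  rw [← Finset.Ico_add_one_right_eq_Icc, Finset.prod_Ico_eq_prod_range,
    Fin.prod_univ_eq_prod_range (fun i => g (i + 1)) b]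
  have hb : b + 1 - 1 = b := by omega
  rw [hb]
  exact Finset.prod_congr rfl fun i _ => by rw [Nat.add_comm]

/-! ### The layered set `Sset` and its cardinality -/

open Finset in
open scoped Classical in
noncomputable def Sset {n : ℕ} (v : Fin n → ℕ) (m : ℕ) (t : ℕ → ℕ) (A : Finset (Fin n)) :
    Finset (Fin n → ℕ) :=
  (Fintype.piFinset fun j => Finset.range (v j + 1)).filter fun w =>
    (∀ j, w j ≤ m) ∧ (∀ j ∈ A, m ≤ w j) ∧ ∀ l ∈ Finset.Icc 1 m, conjAt w l = t l

lemma mem_Sset {n : ℕ} {v : Fin n → ℕ} {m : ℕ} {t : ℕ → ℕ} {A : Finset (Fin n)}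
    {w : Fin n → ℕ} :
    w ∈ Sset v m t A ↔ (∀ j, w j ≤ v j) ∧ (∀ j, w j ≤ m) ∧ (∀ j ∈ A, m ≤ w j) ∧
      ∀ l ∈ Finset.Icc 1 m, conjAt w l = t l := by
  simp [Sset, Fintype.mem_piFinset, Nat.lt_succ_iff]

open scoped Classical in
lemma fiber_card {n : ℕ} (v : Fin n → ℕ) (m : ℕ) (t : ℕ → ℕ) (A B : Finset (Fin n))
    (hBv : ∀ j ∈ B, m + 1 ≤ v j) (hAB : A ⊆ B) (hBc : B.card = t (m + 1)) :
    ((Sset v (m + 1) t A).filter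
        fun w => (Finset.univ.filter fun j => m + 1 ≤ w j) = B).card
      = (Sset v m t B).card := by
  apply Finset.card_bij' (fun w _ => fun j => min (w j) m)
    (fun w' _ => fun j => w' j + if j ∈ B then 1 else 0)
  · intro w hw
    simp only [Finset.mem_filter, mem_Sset] at hw
    obtain ⟨⟨hwv, hwm, hwA, hwc⟩, hwB⟩ := hw
    rw [mem_Sset]
    refine ⟨fun j => le_trans (min_le_left _ _) (hwv j), fun j => min_le_right _ _, ?_, ?_⟩
    · intro j hj
      rw [← hwB] at hj
      simp only [Finset.mem_filter, Finset.mem_univ, true_and] at hj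
      omega
    · intro l hl
      rw [Finset.mem_Icc] at hl
      have heq : conjAt (fun j => min (w j) m) l = conjAt w l := by
        unfold conjAt
        congr 1
        ext j
        simp only [Finset.mem_filter, Finset.mem_univ, true_and]
        omega
      rw [heq]
      exact hwc l (Finset.mem_Icc.mpr ⟨hl.1, by omega⟩)
  · intro w' hw'
    rw [mem_Sset] at hw'
    obtain ⟨hwv, hwm, hwB, hwc⟩ := hw'
    have hwBeq : ∀ j ∈ B, w' j = m := fun j hj => le_antisymm (hwm j) (hwB j hj)
    have htopset : (Finset.univ.filter fun j =>
        m + 1 ≤ w' j + if j ∈ B then 1 else 0) = B := by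
      ext j
      simp only [Finset.mem_filter, Finset.mem_univ, true_and]
      constructor
      · intro h
        by_contra hj
        simp only [hj, if_false, add_zero] at h
        exact absurd (hwm j) (by omega)
      · intro hj
        simp only [hj, if_true]
        have := hwBeq j hj; omega
    simp only [Finset.mem_filter, mem_Sset]
    refine ⟨⟨?_, ?_, ?_, ?_⟩, htopset⟩
    · intro j
      by_cases hj : j ∈ B
      · simp only [hj, if_true]
        have h1 := hwBeq j hj
        have h2 := hBv j hj
        omega
      · simp only [hj, if_false, add_zero]; exact hwv j
    · intro j
      by_cases hj : j ∈ B
      · simp only [hj, if_true]; have := hwm j; omega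
      · simp only [hj, if_false, add_zero]; exact (hwm j).trans (by omega)
    · intro j hj
      have hjB := hAB hj
      simp only [hjB, if_true]
      have := hwBeq j hjB; omega
    · intro l hl
      rw [Finset.mem_Icc] at hl
      by_cases hlm : l ≤ m
      · have heq : conjAt (fun j => w' j + if j ∈ B then 1 else 0) l = conjAt w' l := by
          unfold conjAt
          congr 1
          ext j
          simp only [Finset.mem_filter, Finset.mem_univ, true_and]
          by_cases hj : j ∈ B
          · simp only [hj, if_true]
            have := hwBeq j hj; omega
          · simp only [hj, if_false, add_zero]
        rw [heq]
        exact hwc l (Finset.mem_Icc.mpr ⟨hl.1, hlm⟩)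
      · have hlm1 : l = m + 1 := by omega
        subst hlm1
        show (Finset.univ.filter fun j => m + 1 ≤ w' j + if j ∈ B then 1 else 0).card = t (m + 1)
        rw [htopset, hBc]
  · intro w hw
    simp only [Finset.mem_filter, mem_Sset] at hw
    obtain ⟨⟨hwv, hwm, hwA, hwc⟩, hwB⟩ := hw
    funext j
    dsimp only
    by_cases hj : j ∈ B
    · have hjw : m + 1 ≤ w j := by
        rw [← hwB] at hj
        simpa using hj
      have := hwm j
      simp only [hj, if_true]
      omega
    · have hjw : ¬ (m + 1 ≤ w j) := by
        intro h
        exact hj (by rw [← hwB]; simpa using h)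
      simp only [hj, if_false, add_zero]
      omega
  · intro w' hw'
    rw [mem_Sset] at hw'
    obtain ⟨hwv, hwm, hwB, hwc⟩ := hw'
    funext j
    dsimp only
    by_cases hj : j ∈ B
    · have := le_antisymm (hwm j) (hwB j hj)
      simp only [hj, if_true]
      omega
    · simp only [hj, if_false, add_zero]
      have := hwm j
      omega

open Finset in
lemma card_between {α : Type*} [DecidableEq α] (A V : Finset α) (hAV : A ⊆ V) {c : ℕ}
    (hc : A.card ≤ c) :
    ((V.powerset.filter fun B => A ⊆ B ∧ B.card = c)).card
      = (V.card - A.card).choose (c - A.card) := by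
  rw [← Finset.card_sdiff_of_subset hAV, ← Finset.card_powersetCard]
  apply Finset.card_bij' (fun B _ => B \ A) (fun D _ => D ∪ A)
  · intro B hB
    simp only [mem_filter, mem_powerset] at hB
    rw [Finset.mem_powersetCard]
    exact ⟨Finset.sdiff_subset_sdiff hB.1 le_rfl, by rw [Finset.card_sdiff_of_subset hB.2.1, hB.2.2]⟩
  · intro D hD
    rw [Finset.mem_powersetCard] at hD
    have hdisj : Disjoint D A := Finset.disjoint_of_subset_left hD.1 (Finset.sdiff_disjoint)
    simp only [mem_filter, mem_powerset]
    refine ⟨Finset.union_subset (hD.1.trans Finset.sdiff_subset) hAV, Finset.subset_union_right, ?_⟩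
    rw [Finset.card_union_of_disjoint hdisj, hD.2]
    omega
  · intro B hB
    simp only [mem_filter, mem_powerset] at hB
    exact Finset.sdiff_union_of_subset hB.2.1
  · intro D hD
    rw [Finset.mem_powersetCard] at hD
    have hdisj : Disjoint D A := Finset.disjoint_of_subset_left hD.1 (Finset.sdiff_disjoint)
    rw [Finset.union_sdiff_cancel_right hdisj]

open scoped Classical in
lemma key {n : ℕ} (v : Fin n → ℕ) :
    ∀ (m : ℕ) (t : ℕ → ℕ) (A : Finset (Fin n)),
    (∀ j ∈ A, m ≤ v j) → (∀ i, 1 ≤ i → i ≤ m → t (i + 1) ≤ t i) → t (m + 1) = A.card →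
    (Sset v m t A).card
      = ∏ l ∈ Finset.Icc 1 m, (conjAt v l - t (l + 1)).choose (t l - t (l + 1)) := by
  intro m
  induction m with
  | zero =>
    intro t A _ _ _
    rw [show Finset.Icc 1 0 = ∅ from rfl, Finset.prod_empty]
    rw [Finset.card_eq_one]
    refine ⟨fun _ => 0, ?_⟩
    ext w
    simp only [mem_Sset, Finset.mem_singleton]
    constructor
    · rintro ⟨-, h0, -, -⟩
      funext j; exact Nat.le_zero.mp (h0 j)
    · rintro rfl
      exact ⟨fun j => Nat.zero_le _, fun j => le_rfl, fun j _ => le_rfl, by simp⟩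
  | succ m ih =>
    intro t A hA hmono htop
    have hAV : A ⊆ Finset.univ.filter fun j => m + 1 ≤ v j := fun j hj => by
      simp only [Finset.mem_filter, Finset.mem_univ, true_and]; exact hA j hj
    have hAc : A.card ≤ t (m + 1) := by
      rw [← htop]; exact hmono (m + 1) (by omega) le_rfl
    have hpart : (Sset v (m + 1) t A).card
        = ∑ B ∈ (Finset.univ.filter fun j => m + 1 ≤ v j).powerset.filter
            (fun B => A ⊆ B ∧ B.card = t (m + 1)),
            ((Sset v (m + 1) t A).filter
              fun w => (Finset.univ.filter fun j => m + 1 ≤ w j) = B).card := by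
      apply Finset.card_eq_sum_card_fiberwise
      intro w hw
      rw [Finset.mem_coe, mem_Sset] at hw
      obtain ⟨hwv, hwm, hwA, hwc⟩ := hw
      simp only [Finset.mem_coe, Finset.mem_filter, Finset.mem_powerset]
      refine ⟨?_, ?_, ?_⟩
      · intro j hj
        simp only [Finset.mem_filter, Finset.mem_univ, true_and] at hj ⊢
        exact hj.trans (hwv j)
      · intro j hj
        simp only [Finset.mem_filter, Finset.mem_univ, true_and]
        exact hwA j hj
      · exact hwc (m + 1) (by simp)
    rw [hpart]
    clear hpart
    have hconst : ∀ B ∈ (Finset.univ.filter fun j => m + 1 ≤ v j).powerset.filter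
            (fun B => A ⊆ B ∧ B.card = t (m + 1)),
        ((Sset v (m + 1) t A).filter
            fun w => (Finset.univ.filter fun j => m + 1 ≤ w j) = B).card
          = ∏ l ∈ Finset.Icc 1 m, (conjAt v l - t (l + 1)).choose (t l - t (l + 1)) := by
      intro B hB
      simp only [Finset.mem_filter, Finset.mem_powerset] at hB
      obtain ⟨hBV, hAB, hBc⟩ := hB
      have hBv : ∀ j ∈ B, m + 1 ≤ v j := fun j hj => by
        have := hBV hj
        simpa using this
      rw [fiber_card v m t A B hBv hAB hBc]
      have h1 : ∀ j ∈ B, m ≤ v j := by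
        intro j hj
        have := hBv j hj
        omega
      have h2 : ∀ i, 1 ≤ i → i ≤ m → t (i + 1) ≤ t i := by
        intro i hi1 hi2
        exact hmono i hi1 (by omega)
      exact ih t B h1 h2 hBc.symm
    rw [Finset.sum_congr rfl hconst, Finset.sum_const, smul_eq_mul]
    have hcandcard : ((Finset.univ.filter fun j => m + 1 ≤ v j).powerset.filter
            (fun B => A ⊆ B ∧ B.card = t (m + 1))).card
        = (conjAt v (m + 1) - t (m + 2)).choose (t (m + 1) - t (m + 2)) := by
      have hV : conjAt v (m + 1) = (Finset.univ.filter fun j => m + 1 ≤ v j).card := rfl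
      rw [hV, show t (m + 2) = A.card from htop]
      exact card_between A (Finset.univ.filter fun j => m + 1 ≤ v j) hAV hAc
    rw [hcandcard, Finset.prod_Icc_succ_top (by omega : 1 ≤ m + 1)]
    ring

/-! ### Extension of a `Fin b`-vector to `ℕ` and the `t`-map -/

def extN {b : ℕ} (s : Fin b → ℕ) : ℕ → ℕ := fun l => if h : l < b then s ⟨l, h⟩ else 0

lemma extN_eq {b : ℕ} (s : Fin b → ℕ) (i : Fin b) : extN s i.val = s i := by
  simp [extN, i.isLt]

lemma shiftL_eq_extN {b : ℕ} (s : Fin b → ℕ) (i : Fin b) :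
    shiftL s i = extN s (i.val + 1) := by
  unfold shiftL extN
  by_cases h : i.val + 1 < b <;> simp [h]

def tOf {n b : ℕ} (v : Fin n → ℕ) (s : Fin b → ℕ) : ℕ → ℕ :=
  fun l => conjAt v l - extN s (l - 1)

lemma s_le_conj {n b : ℕ} (v : Fin n → ℕ) (s : Fin b → ℕ)
    (hs2 : ∀ l, extN s l ≤ countAt v (l + 1) + extN s (l + 1)) :
    ∀ l, extN s l ≤ conjAt v (l + 1) := by
  have aux : ∀ m l, b ≤ l + m → extN s l ≤ conjAt v (l + 1) := by
    intro m
    induction m with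
    | zero =>
      intro l hl
      have : extN s l = 0 := dif_neg (by omega)
      omega
    | succ m ih =>
      intro l hl
      by_cases hlb : l < b
      · have h1 := hs2 l
        have h2 := ih (l + 1) (by omega)
        have h3 := conjAt_split' v (l + 1)
        omega
      · have : extN s l = 0 := dif_neg hlb
        omega
  intro l
  exact aux b l (by omega)

lemma t_mono {n b : ℕ} (v : Fin n → ℕ) (s : Fin b → ℕ)
    (hs2 : ∀ l, extN s l ≤ countAt v (l + 1) + extN s (l + 1)) :
    ∀ i, 1 ≤ i → i ≤ b → tOf v s (i + 1) ≤ tOf v s i := by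
  intro l h1 h2
  have hsC := s_le_conj v s hs2
  show conjAt v (l + 1) - extN s (l + 1 - 1) ≤ conjAt v l - extN s (l - 1)
  have e0 : l + 1 - 1 = l := by omega
  rw [e0]
  have e2 : extN s (l - 1) ≤ conjAt v l := by
    have := hsC (l - 1)
    rwa [show l - 1 + 1 = l by omega] at this
  have e3 : extN s l ≤ conjAt v (l + 1) := hsC l
  have e4 : conjAt v l = countAt v l + conjAt v (l + 1) := conjAt_split' v l
  have e5 : extN s (l - 1) ≤ countAt v l + extN s l := by
    have := hs2 (l - 1)
    rwa [show l - 1 + 1 = l by omega] at this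
  omega

theorem stmt6 {n : ℕ} (v : Fin n → ℕ) (k : ℕ)
    (b : ℕ) (hb : b = Finset.univ.sup v)
    (vbar : Fin b → ℕ) (hvbar : ∀ i : Fin b, vbar i = countAt v (i.val + 1))
    (f : (Fin n → ℕ) → (Fin b → ℕ))
    (hf : ∀ u : Fin n → ℕ, (∀ j, u j ≤ v j) →
      ∀ i : Fin b, f u i = conjAt v (i.val + 1) - conjAt (fun j => v j - u j) (i.val + 1)) :
    Finset.image f (compBdd v k) = compBddL vbar k ∧
    ∀ s ∈ compBddL vbar k,
      ((compBdd v k).filter fun u => f u = s).card =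
        ∏ i, Nat.choose (vbar i + shiftL s i) (s i) := by
  classical
  have hvb : ∀ j, v j ≤ b := fun j => by rw [hb]; exact Finset.le_sup (Finset.mem_univ j)
  have hCtop : conjAt v (b + 1) = 0 := conjAt_zero_of_lt' hvb
  have memBdd : ∀ u : Fin n → ℕ, u ∈ compBdd v k ↔ (∑ j, u j = k ∧ ∀ j, u j ≤ v j) := by
    intro u
    simp [compBdd, Finset.Nat.mem_antidiagonalTuple]
  have memBddL : ∀ s : Fin b → ℕ,
      s ∈ compBddL vbar k ↔ (∑ i, s i = k ∧ ∀ i, s i ≤ vbar i + shiftL s i) := by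
    intro s
    simp [compBddL, Finset.Nat.mem_antidiagonalTuple]
  have main : ∀ s ∈ compBddL vbar k,
      ((compBdd v k).filter fun u => f u = s).card =
        ∏ i, Nat.choose (vbar i + shiftL s i) (s i) := by
    intro s hs
    rw [memBddL] at hs
    obtain ⟨hsk, hsb⟩ := hs
    -- the componentwise bound in `extN` form
    have hs2 : ∀ l, extN s l ≤ countAt v (l + 1) + extN s (l + 1) := by
      intro l
      by_cases hl : l < b
      · have h1 := hsb ⟨l, hl⟩
        rw [hvbar ⟨l, hl⟩, shiftL_eq_extN] at h1
        have h2 : extN s l = s ⟨l, hl⟩ := dif_pos hl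
        rw [h2]
        exact h1
      · have h2 : extN s l = 0 := dif_neg hl
        omega
    have hsC := s_le_conj v s hs2
    -- fiber bijection
    have hfib : ((compBdd v k).filter fun u => f u = s).card
        = (Sset v b (tOf v s) ∅).card := by
      apply Finset.card_bij' (fun u _ => fun j => v j - u j) (fun w _ => fun j => v j - w j)
      · -- forward
        intro u hu
        rw [Finset.mem_filter, memBdd] at hu
        obtain ⟨⟨huk, huv⟩, hus⟩ := hu
        rw [mem_Sset]
        refine ⟨fun j => by omega, fun j => by have := hvb j; omega, by simp, ?_⟩
        intro l hl
        rw [Finset.mem_Icc] at hl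
        have hlb : l - 1 < b := by omega
        have hfi := hf u huv ⟨l - 1, hlb⟩
        rw [hus] at hfi
        rw [show (⟨l - 1, hlb⟩ : Fin b).val + 1 = l by simp; omega] at hfi
        have hmon : conjAt (fun j => v j - u j) l ≤ conjAt v l :=
          conjAt_mono' (fun j => by omega) l
        show conjAt (fun j => v j - u j) l = conjAt v l - extN s (l - 1)
        have he : extN s (l - 1) = s ⟨l - 1, hlb⟩ := dif_pos hlb
        rw [he]
        omega
      · -- backward
        intro w hw
        rw [mem_Sset] at hw
        obtain ⟨hwv, hwb, -, hwc⟩ := hw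
        rw [Finset.mem_filter, memBdd]
        have hveq : (fun j => v j - (v j - w j)) = w := by
          funext j
          have := hwv j
          omega
        have hsum : ∑ j, (v j - w j) = k := by
          have hA : ∑ j, (v j - w j) = ∑ j, v j - ∑ j, w j :=
            Finset.sum_tsub_distrib Finset.univ (fun j _ => hwv j)
          have hv : ∑ j, v j = ∑ i : Fin b, conjAt v (i.val + 1) := by
            rw [sum_eq_sum_conjAt' hvb, sum_Icc_one']
          have hwsum : ∑ j, w j = ∑ i : Fin b, conjAt w (i.val + 1) := by
            rw [sum_eq_sum_conjAt' (fun j => (hwv j).trans (hvb j)), sum_Icc_one']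
          have hwc' : ∀ i : Fin b, conjAt w (i.val + 1) = conjAt v (i.val + 1) - s i := by
            intro i
            have := hwc (i.val + 1) (Finset.mem_Icc.mpr ⟨by omega, by omega⟩)
            rw [this]
            show conjAt v (i.val + 1) - extN s (i.val + 1 - 1) = _
            rw [show i.val + 1 - 1 = i.val by omega, extN_eq]
          have hsle : ∀ i : Fin b, s i ≤ conjAt v (i.val + 1) := by
            intro i
            have := hsC i.val
            rwa [extN_eq] at this
          have hws2 : ∑ i : Fin b, conjAt w (i.val + 1)
              = ∑ i : Fin b, conjAt v (i.val + 1) - ∑ i : Fin b, s i := by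
            rw [Finset.sum_congr rfl fun i _ => hwc' i]
            exact Finset.sum_tsub_distrib Finset.univ (fun i _ => hsle i)
          have hk_le : k ≤ ∑ i : Fin b, conjAt v (i.val + 1) := by
            rw [← hsk]
            exact Finset.sum_le_sum fun i _ => hsle i
          rw [hA, hv, hwsum, hws2, hsk]
          omega
        refine ⟨⟨hsum, fun j => Nat.sub_le _ _⟩, ?_⟩
        funext i
        rw [hf (fun j => v j - w j) (fun j => Nat.sub_le _ _) i]
        rw [show (fun j => v j - (v j - w j)) = w from hveq]
        have hwci := hwc (i.val + 1) (Finset.mem_Icc.mpr ⟨by omega, by omega⟩)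
        rw [hwci]
        show conjAt v (i.val + 1) - (conjAt v (i.val + 1) - extN s (i.val + 1 - 1)) = s i
        rw [show i.val + 1 - 1 = i.val by omega, extN_eq]
        have hsle : s i ≤ conjAt v (i.val + 1) := by
          have := hsC i.val
          rwa [extN_eq] at this
        omega
      · -- left inverse
        intro u hu
        rw [Finset.mem_filter, memBdd] at hu
        funext j
        dsimp only
        have := hu.1.2 j
        omega
      · -- right inverse
        intro w hw
        rw [mem_Sset] at hw
        funext j
        dsimp only
        have := hw.1 j
        omega
    rw [hfib]
    rw [key v b (tOf v s) ∅ (by simp) (t_mono v s hs2) (by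
      show conjAt v (b + 1) - extN s (b + 1 - 1) = (∅ : Finset (Fin n)).card
      rw [hCtop]
      simp)]
    -- convert the product
    rw [prod_Icc_one']
    apply Finset.prod_congr rfl
    intro i _
    have e1 : tOf v s (i.val + 1) = conjAt v (i.val + 1) - extN s i.val := by
      show conjAt v (i.val + 1) - extN s (i.val + 1 - 1) = _
      rw [show i.val + 1 - 1 = i.val by omega]
    have e2 : tOf v s (i.val + 1 + 1) = conjAt v (i.val + 2) - extN s (i.val + 1) := by
      show conjAt v (i.val + 1 + 1) - extN s (i.val + 1 + 1 - 1) = _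
      rw [show i.val + 1 + 1 - 1 = i.val + 1 by omega]
    rw [e1, e2]
    have hsplit : conjAt v (i.val + 1) = countAt v (i.val + 1) + conjAt v (i.val + 2) :=
      conjAt_split' v (i.val + 1)
    have hb1 : extN s i.val ≤ conjAt v (i.val + 1) := hsC i.val
    have hb2 : extN s (i.val + 1) ≤ conjAt v (i.val + 2) := hsC (i.val + 1)
    have hb3 : extN s i.val ≤ countAt v (i.val + 1) + extN s (i.val + 1) := hs2 i.val
    have f1 : conjAt v (i.val + 1) - (conjAt v (i.val + 2) - extN s (i.val + 1))
        = countAt v (i.val + 1) + extN s (i.val + 1) := by omega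
    have f2 : (conjAt v (i.val + 1) - extN s i.val)
          - (conjAt v (i.val + 2) - extN s (i.val + 1))
        = (countAt v (i.val + 1) + extN s (i.val + 1)) - extN s i.val := by omega
    rw [f1, f2, Nat.choose_symm hb3]
    rw [hvbar i, shiftL_eq_extN, extN_eq]
  refine ⟨?_, main⟩
  ext s
  simp only [Finset.mem_image]
  constructor
  · rintro ⟨u, hu, rfl⟩
    rw [memBdd] at hu
    obtain ⟨huk, huv⟩ := hu
    have hmon : ∀ l, conjAt (fun j => v j - u j) l ≤ conjAt v l :=
      fun l => conjAt_mono' (fun j => by omega) l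
    have hanti : ∀ l, conjAt (fun j => v j - u j) (l + 1) ≤ conjAt (fun j => v j - u j) l :=
      fun l => conjAt_anti' _ (by omega)
    rw [memBddL]
    constructor
    · -- sum of f u equals k
      have h1 : ∀ i : Fin b, f u i
          = conjAt v (i.val + 1) - conjAt (fun j => v j - u j) (i.val + 1) := hf u huv
      rw [Finset.sum_congr rfl fun i _ => h1 i]
      rw [Finset.sum_tsub_distrib Finset.univ (fun i _ => hmon (i.val + 1))]
      have hv : ∑ j, v j = ∑ i : Fin b, conjAt v (i.val + 1) := by
        rw [sum_eq_sum_conjAt' hvb, sum_Icc_one']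
      have hw : ∑ j, (v j - u j) = ∑ i : Fin b, conjAt (fun j => v j - u j) (i.val + 1) := by
        rw [sum_eq_sum_conjAt' (fun j => le_trans (Nat.sub_le _ _) (hvb j)), sum_Icc_one']
      have hw2 : ∑ j, (v j - u j) = ∑ j, v j - ∑ j, u j :=
        Finset.sum_tsub_distrib Finset.univ (fun j _ => huv j)
      have hu_le : ∑ j, u j ≤ ∑ j, v j := Finset.sum_le_sum fun j _ => huv j
      omega
    · -- the inequality
      intro i
      have d1 : f u i = conjAt v (i.val + 1) - conjAt (fun j => v j - u j) (i.val + 1) :=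
        hf u huv i
      have hvb' : vbar i = countAt v (i.val + 1) := hvbar i
      have hsplit : conjAt v (i.val + 1)
          = countAt v (i.val + 1) + conjAt v (i.val + 1 + 1) := conjAt_split' v (i.val + 1)
      have h1 := hmon (i.val + 1)
      have h3 := hanti (i.val + 1)
      by_cases hi : i.val + 1 < b
      · have hsh : shiftL (f u) i = f u ⟨i.val + 1, hi⟩ := dif_pos hi
        have d2 : f u ⟨i.val + 1, hi⟩ = conjAt v (i.val + 1 + 1)
            - conjAt (fun j => v j - u j) (i.val + 1 + 1) := hf u huv ⟨i.val + 1, hi⟩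
        have h2 := hmon (i.val + 1 + 1)
        omega
      · have hsh : shiftL (f u) i = 0 := dif_neg hi
        have hib : i.val + 1 = b := by have := i.isLt; omega
        have h2 : conjAt v (i.val + 1 + 1) = 0 := by
          rw [show i.val + 1 + 1 = b + 1 by omega]
          exact hCtop
        omega
  · intro hs
    have hcard := main s hs
    have hpos : 0 < ((compBdd v k).filter fun u => f u = s).card := by
      rw [hcard]
      apply Finset.prod_pos
      intro i _
      exact Nat.choose_pos (((memBddL s).mp hs).2 i)
    obtain ⟨u, hu⟩ := Finset.card_pos.mp hpos
    rw [Finset.mem_filter] at hu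
    exact ⟨u, hu.1, hu.2⟩
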